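/- arXiv:2505.09232 — 2 statements merged into one kernel-verified Lean document; each statement's English description precedes it below -/
import Mathlib

section
/- Let Σ ⊆ ℝ^d be a closed connected set with finite H^1 measure, let x ∈ Σ, and let Γ ⊆ Σ be homeomorphic to the circle S^1 with x ∈ Γ. Then for every r > 0 smaller than diam(Γ)/2 and every s ∈ (0, r), the sphere ∂B_s(x) intersects Γ in at least two points: H^0(Γ ∩ ∂B_s(x)) ≥ 2. -/
open MeasureTheory Metric

/-- The circle minus a point is preconnected. -/
lemma stmt11_aux_sphere (q : Metric.sphere (0 : EuclideanSpace ℝ (Fin 2)) 1) :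
    IsPreconnected ({q}ᶜ : Set (Metric.sphere (0 : EuclideanSpace ℝ (Fin 2)) 1)) := by
  have hq : ‖(q : EuclideanSpace ℝ (Fin 2))‖ = 1 := norm_eq_of_mem_sphere q
  have e := (stereographic hq).toHomeomorphSourceTarget
  have hsrc := stereographic_source hq
  have htgt := stereographic_target hq
  have hpre : IsPreconnected (stereographic hq).target := by
    rw [htgt]; exact isPreconnected_univ
  have : IsPreconnected (stereographic hq).source := by
    rw [isPreconnected_iff_preconnectedSpace] at hpre ⊢
    exact e.symm.surjective.denseRange.preconnectedSpace e.symm.continuous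
  rwa [hsrc] at this

/-- A loop minus a (possibly absent) point is preconnected. -/
lemma stmt11_aux_loop {d : ℕ} (Γ : Set (EuclideanSpace ℝ (Fin d)))
    (hloop : Nonempty (Γ ≃ₜ Metric.sphere (0 : EuclideanSpace ℝ (Fin 2)) 1))
    (p : EuclideanSpace ℝ (Fin d)) : IsPreconnected (Γ \ {p}) := by
  obtain ⟨e⟩ := hloop
  by_cases hp : p ∈ Γ
  · set p₀ : Γ := ⟨p, hp⟩
    have h1 : IsPreconnected ({e p₀}ᶜ : Set (Metric.sphere (0 : EuclideanSpace ℝ (Fin 2)) 1)) :=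
      stmt11_aux_sphere (e p₀)
    have h2 : IsPreconnected (e.symm '' ({e p₀}ᶜ)) := h1.image _ e.symm.continuous.continuousOn
    have h3 : e.symm '' ({e p₀}ᶜ) = ({p₀}ᶜ : Set Γ) := by
      rw [Set.image_compl_eq e.symm.bijective, Set.image_singleton, e.symm_apply_apply]
    rw [h3] at h2
    have h4 : IsPreconnected ((↑) '' ({p₀}ᶜ : Set Γ) : Set (EuclideanSpace ℝ (Fin d))) :=
      h2.image _ continuous_subtype_val.continuousOn
    have h5 : ((↑) '' ({p₀}ᶜ : Set Γ) : Set (EuclideanSpace ℝ (Fin d))) = Γ \ {p} := by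
      ext z
      simp only [Set.mem_image, Set.mem_compl_iff, Set.mem_singleton_iff, Set.mem_diff]
      constructor
      · rintro ⟨⟨w, hwΓ⟩, hw, rfl⟩
        refine ⟨hwΓ, fun h => hw ?_⟩
        simp only [Set.mem_singleton_iff] at h ⊢
        exact Subtype.ext h
      · rintro ⟨hzΓ, hzp⟩
        exact ⟨⟨z, hzΓ⟩, fun h => hzp (congrArg Subtype.val (Set.mem_singleton_iff.mp h)), rfl⟩
    rwa [h5] at h4
  · have hΓ : Γ \ {p} = Γ := by
      exact Set.diff_singleton_eq_self hp
    rw [hΓ]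
    have : IsPreconnected ((↑) '' (Set.univ : Set Γ) : Set (EuclideanSpace ℝ (Fin d))) := by
      have h2 : (1 : Cardinal) < Module.rank ℝ (EuclideanSpace ℝ (Fin 2)) := by
        rw [← Module.finrank_eq_rank, finrank_euclideanSpace_fin]
        norm_num
      haveI : PreconnectedSpace (Metric.sphere (0 : EuclideanSpace ℝ (Fin 2)) 1) :=
        Subtype.preconnectedSpace
          (isConnected_sphere h2 (0 : EuclideanSpace ℝ (Fin 2)) zero_le_one).isPreconnected
      have : PreconnectedSpace Γ := e.symm.surjective.denseRange.preconnectedSpace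
        e.symm.continuous
      exact isPreconnected_univ.image _ continuous_subtype_val.continuousOn
    rwa [Set.image_univ, Subtype.range_coe] at this

/-- A loop (a subset homeomorphic to `S¹`) through `x` crosses every sufficiently small
sphere around `x` in at least two points. -/
theorem stmt11 {d : ℕ} (S Γ : Set (EuclideanSpace ℝ (Fin d)))
    (hS : IsClosed S) (hSconn : IsConnected S) (hfin : μH[1] S ≠ ⊤)
    (hΓS : Γ ⊆ S)
    (hloop : Nonempty (Γ ≃ₜ Metric.sphere (0 : EuclideanSpace ℝ (Fin 2)) 1))
    (x : EuclideanSpace ℝ (Fin d)) (hx : x ∈ Γ)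
    (r : ℝ) (hr : 0 < r) (hrd : r < Metric.diam Γ / 2)
    (s : ℝ) (hs : s ∈ Set.Ioo 0 r) :
    2 ≤ (Γ ∩ Metric.sphere x s).encard := by
  obtain ⟨hs0, hsr⟩ := hs
  by_contra hlt
  push_neg at hlt
  have hle1 : (Γ ∩ Metric.sphere x s).encard ≤ 1 := by
    exact Order.le_of_lt_add_one (by norm_num at hlt ⊢; exact hlt)
  rw [Set.encard_le_one_iff] at hle1
  -- find a far point y ∈ Γ
  have hdiam : 2 * r < Metric.diam Γ := by linarith
  have hy : ∃ y ∈ Γ, r < dist x y := by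
    by_contra h
    push_neg at h
    have : Metric.diam Γ ≤ 2 * r := by
      apply Metric.diam_le_of_forall_dist_le (by linarith)
      intro a ha b hb
      calc dist a b ≤ dist a x + dist x b := dist_triangle a x b
        _ ≤ r + r := add_le_add (by rw [dist_comm]; exact h a ha) (h b hb)
        _ = 2 * r := by ring
    linarith
  obtain ⟨y, hyΓ, hxy⟩ := hy
  -- pick p with dist x p = s containing the intersection
  have hp : ∃ p, dist x p = s ∧ Γ ∩ Metric.sphere x s ⊆ {p} := by
    rcases Set.eq_empty_or_nonempty (Γ ∩ Metric.sphere x s) with h | ⟨q, hq⟩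
    · refine ⟨x + (s / dist x y) • (y - x), ?_, by rw [h]; exact Set.empty_subset _⟩
      have hdxy : dist x y ≠ 0 := (hr.trans hxy).ne'
      rw [dist_comm, dist_eq_norm, add_sub_cancel_left, norm_smul, norm_div, Real.norm_eq_abs,
        abs_of_pos hs0, ← dist_eq_norm, dist_comm y x, Real.norm_eq_abs,
        abs_of_nonneg dist_nonneg, div_mul_cancel₀ _ hdxy]
    · refine ⟨q, ?_, fun z hz => hle1 z q hz hq⟩
      rw [dist_comm]; exact Metric.mem_sphere.mp hq.2
  obtain ⟨p, hps, hpsub⟩ := hp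
  have hxp : x ≠ p := fun h => by rw [← h, dist_self] at hps; linarith
  have hyp : y ≠ p := fun h => by rw [← h] at hps; linarith
  -- Γ \ {p} is preconnected
  have hconn : IsPreconnected (Γ \ {p}) := stmt11_aux_loop Γ hloop p
  -- separation
  set U : Set (EuclideanSpace ℝ (Fin d)) := Metric.ball x s with hUdef
  set V : Set (EuclideanSpace ℝ (Fin d)) := (Metric.closedBall x s)ᶜ with hVdef
  have hU : IsOpen U := Metric.isOpen_ball
  have hV : IsOpen V := Metric.isClosed_closedBall.isOpen_compl
  have hcover : Γ \ {p} ⊆ U ∪ V := by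
    rintro z ⟨hzΓ, hzp⟩
    rcases lt_trichotomy (dist z x) s with h | h | h
    · exact Or.inl (Metric.mem_ball.mpr h)
    · exact absurd (hpsub ⟨hzΓ, Metric.mem_sphere.mpr h⟩) hzp
    · exact Or.inr fun hc => absurd (Metric.mem_closedBall.mp hc) (not_le.mpr h)
  have hxU : x ∈ (Γ \ {p}) ∩ U :=
    ⟨⟨hx, fun h => hxp (Set.mem_singleton_iff.mp h)⟩, Metric.mem_ball_self hs0⟩
  have hyV : y ∈ (Γ \ {p}) ∩ V := by
    refine ⟨⟨hyΓ, fun h => hyp (Set.mem_singleton_iff.mp h)⟩, fun hc => ?_⟩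
    have := Metric.mem_closedBall.mp hc
    rw [dist_comm] at this
    linarith
  obtain ⟨z, hz, hzU, hzV⟩ := hconn U V hU hV hcover ⟨x, hxU⟩ ⟨y, hyV⟩
  exact hzV (Metric.ball_subset_closedBall hzU)
end

section
/- Let Σ ⊆ ℝ^d be a closed connected set, x ∈ Σ, and r > 0 such that Σ ∩ ∂B_r(x) consists of exactly two points {y₁, y₂}, Σ ∩ B̄_r(x) is connected, and there exists an arc Γ' ⊆ Σ \ B_r(x) joining y₁ to y₂. Then Σ \ B_r(x) is connected. -/
open Metric

private lemma aux12 {d : ℕ} (S : Set (EuclideanSpace ℝ (Fin d)))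
    (hS : IsClosed S) (hconn : IsConnected S)
    (x : EuclideanSpace ℝ (Fin d)) (r : ℝ)
    (y₁ y₂ : EuclideanSpace ℝ (Fin d))
    (hsph : S ∩ Metric.sphere x r = {y₁, y₂})
    (u v : Set (EuclideanSpace ℝ (Fin d)))
    (hu : IsClosed u) (hv : IsClosed v)
    (hcov : S \ Metric.ball x r ⊆ u ∪ v)
    (hdisj : ¬ ((S \ Metric.ball x r) ∩ (u ∩ v)).Nonempty)
    (hy₁ : y₁ ∈ u) (hy₂ : y₂ ∈ u)
    (hvne : ((S \ Metric.ball x r) ∩ v).Nonempty) : False := by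
  set A := S \ Metric.ball x r with hA
  have hAclosed : IsClosed A := hS.sdiff isOpen_ball
  have hy₁S : y₁ ∈ S ∩ Metric.sphere x r := by rw [hsph]; left; rfl
  have hy₂S : y₂ ∈ S ∩ Metric.sphere x r := by rw [hsph]; right; rfl
  -- apply closed-set preconnectedness of S
  have hpre := isPreconnected_closed_iff.mp hconn.isPreconnected
  have hu' : IsClosed ((A ∩ u) ∪ (S ∩ Metric.closedBall x r)) :=
    (hAclosed.inter hu).union (hS.inter Metric.isClosed_closedBall)
  have hv' : IsClosed (A ∩ v) := hAclosed.inter hv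
  have hcov' : S ⊆ ((A ∩ u) ∪ (S ∩ Metric.closedBall x r)) ∪ (A ∩ v) := by
    intro z hz
    by_cases hb : z ∈ Metric.closedBall x r
    · exact Or.inl (Or.inr ⟨hz, hb⟩)
    · have hzA : z ∈ A := ⟨hz, fun h => hb (ball_subset_closedBall h)⟩
      rcases hcov hzA with h | h
      · exact Or.inl (Or.inl ⟨hzA, h⟩)
      · exact Or.inr ⟨hzA, h⟩
  have h1 : (S ∩ ((A ∩ u) ∪ (S ∩ Metric.closedBall x r))).Nonempty :=
    ⟨y₁, hy₁S.1, Or.inr ⟨hy₁S.1, sphere_subset_closedBall hy₁S.2⟩⟩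
  have h2 : (S ∩ (A ∩ v)).Nonempty := ⟨hvne.choose, hvne.choose_spec.1.1, hvne.choose_spec⟩
  obtain ⟨z, hzS, hz1, hzA, hzv⟩ := hpre _ _ hu' hv' hcov' h1 h2
  rcases hz1 with ⟨-, hzu⟩ | ⟨-, hzcb⟩
  · exact hdisj ⟨z, hzA, hzu, hzv⟩
  · -- z ∈ A ∩ closedBall ⊆ sphere, so z ∈ {y₁, y₂} ⊆ u
    have hzsph : z ∈ S ∩ Metric.sphere x r := by
      refine ⟨hzS, ?_⟩
      have h1 : dist z x ≤ r := hzcb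
      have h2 : ¬ dist z x < r := hzA.2
      exact Metric.mem_sphere.mpr (le_antisymm h1 (not_lt.mp h2))
    have : z ∈ u := by
      rw [hsph] at hzsph
      rcases hzsph with h | h
      · exact h ▸ hy₁
      · exact h ▸ hy₂
    exact hdisj ⟨z, hzA, this, hzv⟩

/-- Connectivity preservation: if `S ∩ ∂B_r(x) = {y₁, y₂}`, `S ∩ B̄_r(x)` is connected and
there is an arc in `S \ B_r(x)` joining `y₁` to `y₂`, then `S \ B_r(x)` is connected. -/
theorem stmt12 {d : ℕ} (S : Set (EuclideanSpace ℝ (Fin d)))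
    (hS : IsClosed S) (hconn : IsConnected S)
    (x : EuclideanSpace ℝ (Fin d)) (r : ℝ) (hr : 0 < r)
    (y₁ y₂ : EuclideanSpace ℝ (Fin d))
    (hsph : S ∩ Metric.sphere x r = {y₁, y₂})
    (hball : IsConnected (S ∩ Metric.closedBall x r))
    (harc : JoinedIn (S \ Metric.ball x r) y₁ y₂) :
    IsConnected (S \ Metric.ball x r) := by
  set A := S \ Metric.ball x r with hA
  have hy₁S : y₁ ∈ S ∩ Metric.sphere x r := by rw [hsph]; left; rfl
  have hy₁A : y₁ ∈ A := ⟨hy₁S.1, by simp [Metric.mem_ball, hy₁S.2.out]⟩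
  refine ⟨⟨y₁, hy₁A⟩, ?_⟩
  rw [isPreconnected_closed_iff]
  intro u v hu hv hcov h1 h2
  by_contra hdisj
  -- the arc gives a connected subset of A containing y₁ and y₂
  obtain ⟨γ, hγ⟩ := harc
  have hγconn : IsPreconnected (Set.range γ) :=
    (isConnected_range γ.continuous).isPreconnected
  have hγsub : Set.range γ ⊆ A := by rintro z ⟨t, rfl⟩; exact hγ t
  have hsplit : Set.range γ ⊆ u ∨ Set.range γ ⊆ v := by
    by_contra hc
    push_neg at hc
    obtain ⟨h1', h2'⟩ := hc
    rw [Set.not_subset] at h1' h2'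
    obtain ⟨a, ha, hau⟩ := h1'
    obtain ⟨b, hb, hbv⟩ := h2'
    have hav : a ∈ v := (hcov (hγsub ha)).resolve_left hau
    have hbu : b ∈ u := (hcov (hγsub hb)).resolve_right hbv
    obtain ⟨z, hz, hzu, hzv⟩ := isPreconnected_closed_iff.mp hγconn u v hu hv
      (fun z hz => hcov (hγsub hz)) ⟨b, hb, hbu⟩ ⟨a, ha, hav⟩
    exact hdisj ⟨z, hγsub hz, hzu, hzv⟩
  have hy₁r : y₁ ∈ Set.range γ := ⟨0, γ.source⟩
  have hy₂r : y₂ ∈ Set.range γ := ⟨1, γ.target⟩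
  rcases hsplit with h | h
  · exact aux12 S hS hconn x r y₁ y₂ hsph u v hu hv hcov hdisj (h hy₁r) (h hy₂r) h2
  · refine aux12 S hS hconn x r y₁ y₂ hsph v u hv hu ?_ ?_ (h hy₁r) (h hy₂r) h1
    · intro z hz; exact (hcov hz).symm
    · intro hc; exact hdisj ⟨hc.choose, hc.choose_spec.1, hc.choose_spec.2.2, hc.choose_spec.2.1⟩
end
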